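/- Let m ≥ 2 and let C₂ = { X ∈ ℝ^{n×n} : X symmetric positive semidefinite, rank(X) ≤ m−1 }. Let X ∈ ℝ^{n×n} be symmetric with spectral decomposition X = Q Λ Qᵀ, where Q is orthogonal and Λ = diag(λ₁, ..., λₙ) with λ₁ ≥ λ₂ ≥ ... ≥ λₙ. Then the matrix Q Λ⁺_{m−1} Qᵀ, where Λ⁺_{m−1} = diag(max{0, λ₁}, ..., max{0, λ_{m−1}}, 0, ..., 0), belongs to C₂ and minimizes the Frobenius distance to X over C₂. -/

import Mathlib

open Matrix

/-- The Frobenius norm of a real `n × n` matrix. -/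
noncomputable def frobNorm {n : ℕ} (A : Matrix (Fin n) (Fin n) ℝ) : ℝ :=
  Real.sqrt (∑ i, ∑ j, (A i j) ^ 2)

/-- The constraint set `C₂`: symmetric positive semidefinite `n × n` matrices of rank at
most `m - 1`. -/
def C2set (n m : ℕ) : Set (Matrix (Fin n) (Fin n) ℝ) :=
  {Y | Y.PosSemidef ∧ Y.rank ≤ m - 1}

/-- Let `X = Q Λ Qᵀ` be a spectral decomposition of a symmetric matrix `X`,
with `Q` orthogonal and eigenvalues `λ₁ ≥ ... ≥ λₙ`. Then `Q Λ⁺_{m-1} Qᵀ`, obtained by keeping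
the positive parts of the `m - 1` largest eigenvalues and zeroing the rest, belongs to `C₂`
and minimizes the Frobenius distance to `X` over `C₂`. -/
private lemma frobSq_eq_trace {n : ℕ} (A : Matrix (Fin n) (Fin n) ℝ) :
    ∑ i, ∑ j, (A i j) ^ 2 = Matrix.trace (Aᵀ * A) := by
  rw [Finset.sum_comm]
  simp [Matrix.trace, Matrix.mul_apply, Matrix.diag, sq]

private lemma frobSq_conj {n : ℕ} (Q A : Matrix (Fin n) (Fin n) ℝ)
    (hQ : Qᵀ * Q = 1) :
    ∑ i, ∑ j, ((Q * A * Qᵀ) i j) ^ 2 = ∑ i, ∑ j, (A i j) ^ 2 := by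
  rw [frobSq_eq_trace, frobSq_eq_trace]
  have h1 : (Q * A * Qᵀ)ᵀ * (Q * A * Qᵀ) = Q * (Aᵀ * A) * Qᵀ := by
    rw [Matrix.transpose_mul, Matrix.transpose_mul, Matrix.transpose_transpose]
    calc Qᵀᵀ * (Aᵀ * Qᵀ) * (Q * A * Qᵀ) = Q * (Aᵀ * ((Qᵀ * Q) * (A * Qᵀ))) := by
          rw [Matrix.transpose_transpose]; simp only [Matrix.mul_assoc]
      _ = Q * (Aᵀ * A) * Qᵀ := by rw [hQ, one_mul]; simp only [Matrix.mul_assoc]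
  rw [h1, Matrix.trace_mul_cycle, ← Matrix.mul_assoc, hQ, one_mul]

private lemma frobSq_diagonal {n : ℕ} (d : Fin n → ℝ) :
    ∑ i, ∑ j, ((Matrix.diagonal d) i j) ^ 2 = ∑ i, d i ^ 2 := by
  simp [Matrix.diagonal_apply, apply_ite (· ^ 2)]

private lemma ds_key {n : ℕ} (S : Matrix (Fin n) (Fin n) ℝ) (a b : Fin n → ℝ)
    (hS0 : ∀ i j, 0 ≤ S i j) (hrow : ∀ i, ∑ j, S i j = 1) (hcol : ∀ j, ∑ i, S i j = 1)
    (ha : Antitone a) (hb : Antitone b) :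
    ∑ i, ∑ j, a i * b j * S i j ≤ ∑ i, a i * b i := by
  have hmem : S ∈ doublyStochastic ℝ (Fin n) :=
    mem_doublyStochastic_iff_sum.mpr ⟨hS0, hrow, hcol⟩
  obtain ⟨w, hw0, hw1, hwS⟩ := exists_eq_sum_perm_of_mem_doublyStochastic hmem
  have key : ∀ σ : Equiv.Perm (Fin n), ∑ i, a i * b (σ i) ≤ ∑ i, a i * b i := by
    intro σ
    simpa [smul_eq_mul] using (ha.monovary hb).sum_smul_comp_perm_le_sum_smul (σ := σ)
  have hS' : ∀ i j, S i j = ∑ σ : Equiv.Perm (Fin n), w σ * (if j = σ i then 1 else 0) := by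
    intro i j; rw [← hwS]
    simp only [Matrix.sum_apply, Matrix.smul_apply, Equiv.Perm.permMatrix,
      PEquiv.toMatrix_apply, Equiv.toPEquiv_apply, Option.mem_def, Option.some.injEq,
      smul_eq_mul, mul_ite, mul_one, mul_zero]
    exact Finset.sum_congr rfl fun σ _ => by simp [eq_comm]
  calc ∑ i, ∑ j, a i * b j * S i j
      = ∑ i, ∑ σ : Equiv.Perm (Fin n), ∑ j, a i * b j * (w σ * (if j = σ i then 1 else 0)) := by
        refine Finset.sum_congr rfl fun i _ => ?_
        rw [Finset.sum_comm]
        exact Finset.sum_congr rfl fun j _ => by rw [hS' i j, Finset.mul_sum]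
    _ = ∑ σ : Equiv.Perm (Fin n), ∑ i, a i * b (σ i) * w σ := by
        rw [Finset.sum_comm]
        refine Finset.sum_congr rfl fun σ _ => Finset.sum_congr rfl fun i _ => ?_
        simp [mul_ite, Finset.sum_ite_eq']
    _ = ∑ σ : Equiv.Perm (Fin n), w σ * ∑ i, a i * b (σ i) := by
        refine Finset.sum_congr rfl fun σ _ => ?_
        rw [Finset.mul_sum]; exact Finset.sum_congr rfl fun i _ => by ring
    _ ≤ ∑ σ : Equiv.Perm (Fin n), w σ * ∑ i, a i * b i := by
        exact Finset.sum_le_sum fun σ _ => mul_le_mul_of_nonneg_left (key σ) (hw0 σ)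
    _ = ∑ i, a i * b i := by rw [← Finset.sum_mul, hw1, one_mul]

theorem stmt11 (n m : ℕ) (hm : 2 ≤ m)
    (X Q : Matrix (Fin n) (Fin n) ℝ) (lam : Fin n → ℝ)
    (hXsym : X.IsSymm)
    (hQ : Qᵀ * Q = 1)
    (hlam : ∀ i j : Fin n, i ≤ j → lam j ≤ lam i)
    (hX : X = Q * Matrix.diagonal lam * Qᵀ) :
    Q * Matrix.diagonal (fun i : Fin n => if (i : ℕ) < m - 1 then max 0 (lam i) else 0) * Qᵀ
      ∈ C2set n m ∧
    ∀ Y ∈ C2set n m,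
      frobNorm (Q * Matrix.diagonal (fun i : Fin n => if (i : ℕ) < m - 1 then max 0 (lam i) else 0)
        * Qᵀ - X) ≤ frobNorm (Y - X) := by
  set μ : Fin n → ℝ := fun i : Fin n => if (i : ℕ) < m - 1 then max 0 (lam i) else 0 with hμdef
  have hQQ : Q * Qᵀ = 1 := mul_eq_one_comm.mp hQ
  have hμ0 : ∀ i, 0 ≤ μ i := fun i => by
    simp only [hμdef]; split
    · exact le_max_left _ _
    · exact le_refl 0
  have hZpsd : (Q * Matrix.diagonal μ * Qᵀ).PosSemidef := by
    have hD : (Matrix.diagonal μ).PosSemidef := Matrix.posSemidef_diagonal_iff.mpr hμ0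
    have h := hD.mul_mul_conjTranspose_same Q
    simpa [Matrix.conjTranspose_eq_transpose_of_trivial] using h
  have hdetQ : IsUnit Q.det := by
    have h : Qᵀ.det * Q.det = 1 := by rw [← Matrix.det_mul, hQ, Matrix.det_one]
    exact IsUnit.of_mul_eq_one _ (by rwa [Matrix.det_transpose] at h)
  have hdetQT : IsUnit Qᵀ.det := by rwa [Matrix.det_transpose]
  have hcard : Fintype.card {i : Fin n // μ i ≠ 0} ≤ m - 1 := by
    have hinj : Function.Injective
        (fun x : {i : Fin n // μ i ≠ 0} =>
          (⟨(x.1 : ℕ), by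
            by_contra hc
            exact x.2 (by simp only [hμdef]; rw [if_neg (by omega)])⟩ : Fin (m - 1))) := by
      intro x y hxy
      have h1 : (x.1 : ℕ) = (y.1 : ℕ) := by simpa [Fin.mk.injEq] using hxy
      exact Subtype.ext (Fin.ext h1)
    simpa using Fintype.card_le_of_injective _ hinj
  have hZrank : (Q * Matrix.diagonal μ * Qᵀ).rank ≤ m - 1 := by
    rw [Matrix.rank_mul_eq_left_of_isUnit_det Qᵀ (Q * Matrix.diagonal μ) hdetQT,
      Matrix.rank_mul_eq_right_of_isUnit_det Q (Matrix.diagonal μ) hdetQ,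
      Matrix.rank_diagonal]
    exact hcard
  refine ⟨⟨hZpsd, hZrank⟩, ?_⟩
  intro Y hY
  obtain ⟨hYpsd, hYrank⟩ := hY
  have hH : Y.IsHermitian := hYpsd.1
  set e : Fin n → ℝ := hH.eigenvalues with he
  set U : Matrix (Fin n) (Fin n) ℝ := (hH.eigenvectorUnitary : Matrix (Fin n) (Fin n) ℝ)
    with hUdef
  have hUU : Uᵀ * U = 1 := by
    have h := Matrix.mem_unitaryGroup_iff'.mp hH.eigenvectorUnitary.2
    simpa [Matrix.star_eq_conjTranspose, Matrix.conjTranspose_eq_transpose_of_trivial] using h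
  have hUUt : U * Uᵀ = 1 := mul_eq_one_comm.mp hUU
  have hYdecomp : Y = U * Matrix.diagonal e * Uᵀ := by
    have h := hH.spectral_theorem
    simpa [Matrix.star_eq_conjTranspose, Matrix.conjTranspose_eq_transpose_of_trivial] using h
  have hYsymm : Yᵀ = Y := by
    rw [← Matrix.conjTranspose_eq_transpose_of_trivial]; exact hH
  have hXs : Xᵀ = X := hXsym
  set V : Matrix (Fin n) (Fin n) ℝ := Uᵀ * Q with hVdef
  have hVt : Vᵀ = Qᵀ * U := by rw [hVdef, Matrix.transpose_mul, Matrix.transpose_transpose]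
  have hVV : Vᵀ * V = 1 := by
    rw [hVt, hVdef, Matrix.mul_assoc, ← Matrix.mul_assoc U Uᵀ Q, hUUt, Matrix.one_mul, hQ]
  have hVVt : V * Vᵀ = 1 := mul_eq_one_comm.mp hVV
  set S : Matrix (Fin n) (Fin n) ℝ := fun i j => V i j ^ 2 with hSdef
  have hS0 : ∀ i j, 0 ≤ S i j := fun i j => sq_nonneg _
  have hSrow : ∀ i, ∑ j, S i j = 1 := by
    intro i
    have h1 : (V * Vᵀ) i i = 1 := by rw [hVVt]; simp [Matrix.one_apply]
    rw [← h1, Matrix.mul_apply]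
    exact Finset.sum_congr rfl fun j _ => by
      rw [Matrix.transpose_apply]; simp [hSdef, sq]
  have hScol : ∀ j, ∑ i, S i j = 1 := by
    intro j
    have h1 : (Vᵀ * V) j j = 1 := by rw [hVV]; simp [Matrix.one_apply]
    rw [← h1, Matrix.mul_apply]
    exact Finset.sum_congr rfl fun i _ => by
      rw [Matrix.transpose_apply]; simp [hSdef, sq]
  set τ : Equiv.Perm (Fin n) := Fin.revPerm.trans (Tuple.sort e) with hτ
  set ν : Fin n → ℝ := fun i => e (τ i) with hν
  have hνanti : Antitone ν := by
    intro i j hij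
    have h1 : Fin.rev j ≤ Fin.rev i := Fin.rev_le_rev.mpr hij
    exact Tuple.monotone_sort e h1
  have hν0 : ∀ i, 0 ≤ ν i := fun i => hYpsd.eigenvalues_nonneg (τ i)
  have hcard2 : Fintype.card {j : Fin n // ν j ≠ 0} ≤ m - 1 := by
    have h1 : Y.rank = Fintype.card {j : Fin n // e j ≠ 0} := hH.rank_eq_card_non_zero_eigs
    have h2 : Fintype.card {j : Fin n // ν j ≠ 0} = Fintype.card {j : Fin n // e j ≠ 0} :=
      Fintype.card_congr (τ.subtypeEquiv fun j => Iff.rfl)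
    omega
  have hνzero : ∀ i : Fin n, m - 1 ≤ (i : ℕ) → ν i = 0 := by
    intro i hi
    by_contra hne
    have hpos : 0 < ν i := lt_of_le_of_ne (hν0 i) (Ne.symm hne)
    have key : ∀ k : Fin ((i : ℕ) + 1),
        ν ⟨(k : ℕ), lt_of_lt_of_le k.isLt (Nat.succ_le_of_lt i.isLt)⟩ ≠ 0 := by
      intro k
      have hle : (⟨(k : ℕ), lt_of_lt_of_le k.isLt (Nat.succ_le_of_lt i.isLt)⟩ : Fin n) ≤ i := by
        simp only [Fin.le_def]
        exact Nat.lt_succ_iff.mp k.isLt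
      intro h0
      have h2 := hνanti hle
      rw [h0] at h2
      linarith
    have hinj : Function.Injective (fun k : Fin ((i : ℕ) + 1) =>
        (⟨⟨(k : ℕ), lt_of_lt_of_le k.isLt (Nat.succ_le_of_lt i.isLt)⟩, key k⟩ :
          {j : Fin n // ν j ≠ 0})) := by
      intro a b hab
      have h3 : (a : ℕ) = (b : ℕ) := by
        simpa [Subtype.ext_iff, Fin.ext_iff] using hab
      exact Fin.ext h3
    have hc := Fintype.card_le_of_injective _ hinj
    simp only [Fintype.card_fin] at hc
    omega
  -- Frobenius norm of the candidate
  have hZX : Q * Matrix.diagonal μ * Qᵀ - X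
      = Q * Matrix.diagonal (fun i => μ i - lam i) * Qᵀ := by
    rw [hX]
    have hd : Matrix.diagonal (fun i => μ i - lam i)
        = Matrix.diagonal μ - Matrix.diagonal lam := by
      ext i j
      by_cases hij : i = j <;> simp [Matrix.diagonal_apply, hij]
    rw [hd, Matrix.mul_sub, Matrix.sub_mul]
  have hFZ : ∑ i, ∑ j, ((Q * Matrix.diagonal μ * Qᵀ - X) i j) ^ 2
      = ∑ i, (μ i - lam i) ^ 2 := by
    rw [hZX, frobSq_conj _ _ hQ, frobSq_diagonal]
  -- expansion of the distance to Y
  have hexp : ∑ i, ∑ j, ((Y - X) i j) ^ 2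
      = Matrix.trace (Y * Y) - 2 * Matrix.trace (Y * X) + Matrix.trace (X * X) := by
    rw [frobSq_eq_trace, Matrix.transpose_sub, hYsymm, hXs]
    simp only [Matrix.sub_mul, Matrix.mul_sub, Matrix.trace_sub]
    rw [Matrix.trace_mul_comm X Y]
    ring
  have hYY : Matrix.trace (Y * Y) = ∑ i, e i ^ 2 := by
    nth_rewrite 1 [← hYsymm]
    rw [← frobSq_eq_trace]
    rw [hYdecomp, frobSq_conj _ _ hUU, frobSq_diagonal]
  have hXX : Matrix.trace (X * X) = ∑ i, lam i ^ 2 := by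
    nth_rewrite 1 [← hXs]
    rw [← frobSq_eq_trace]
    rw [hX, frobSq_conj _ _ hQ, frobSq_diagonal]
  have hM : ∀ i, (V * Matrix.diagonal lam * Vᵀ) i i = ∑ j, lam j * V i j ^ 2 := by
    intro i
    rw [Matrix.mul_apply]
    exact Finset.sum_congr rfl fun j _ => by
      rw [Matrix.mul_diagonal, Matrix.transpose_apply]; ring
  have htrYX : Matrix.trace (Y * X) = ∑ i, ∑ j, e i * lam j * S i j := by
    have h1 : U * (Matrix.diagonal e * (V * Matrix.diagonal lam * Vᵀ)) * Uᵀ = Y * X := by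
      rw [hVdef, hYdecomp, hX]
      simp only [Matrix.transpose_mul, Matrix.transpose_transpose, Matrix.mul_assoc]
      rw [hUUt, Matrix.mul_one]
    rw [← h1, Matrix.trace_mul_cycle, ← Matrix.mul_assoc, hUU, Matrix.one_mul]
    rw [Matrix.trace]
    refine Finset.sum_congr rfl fun i _ => ?_
    rw [Matrix.diag_apply, Matrix.diagonal_mul, hM i, Finset.mul_sum]
    exact Finset.sum_congr rfl fun j _ => by simp only [hSdef]; ring
  have hreindex : ∑ i, ∑ j, e i * lam j * S i j = ∑ i, ∑ j, ν i * lam j * S (τ i) j :=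
    (Equiv.sum_comp τ (fun i => ∑ j, e i * lam j * S i j)).symm
  have hds : ∑ i, ∑ j, ν i * lam j * S (τ i) j ≤ ∑ i, ν i * lam i := by
    refine ds_key (fun i j => S (τ i) j) ν lam (fun i j => hS0 (τ i) j) (fun i => hSrow (τ i))
      (fun j => ?_) hνanti (fun i j h => hlam i j h)
    exact (Equiv.sum_comp τ (fun i => S i j)).trans (hScol j)
  have hsum_e : ∑ i, e i ^ 2 = ∑ i, ν i ^ 2 :=
    (Equiv.sum_comp τ (fun i => e i ^ 2)).symm
  have hpoint : ∀ i, (μ i - lam i) ^ 2 ≤ (ν i - lam i) ^ 2 := by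
    intro i
    by_cases hi : (i : ℕ) < m - 1
    · simp only [hμdef, if_pos hi]
      rcases le_or_gt 0 (lam i) with h | h
      · rw [max_eq_right h]
        simpa using sq_nonneg (ν i - lam i)
      · rw [max_eq_left h.le]
        have := hν0 i
        nlinarith
    · simp only [hμdef, if_neg hi]
      rw [hνzero i (Nat.le_of_not_lt hi)]
  have h3 : Matrix.trace (Y * X) ≤ ∑ i, ν i * lam i := by
    rw [htrYX, hreindex]; exact hds
  have h2 : ∑ i, (ν i - lam i) ^ 2
      = ∑ i, ν i ^ 2 - 2 * ∑ i, ν i * lam i + ∑ i, lam i ^ 2 := by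
    rw [Finset.mul_sum, ← Finset.sum_sub_distrib, ← Finset.sum_add_distrib]
    exact Finset.sum_congr rfl fun i _ => by ring
  have h1 : ∑ i, (μ i - lam i) ^ 2 ≤ ∑ i, (ν i - lam i) ^ 2 :=
    Finset.sum_le_sum fun i _ => hpoint i
  have hchain : ∑ i, (μ i - lam i) ^ 2 ≤ ∑ i, ∑ j, ((Y - X) i j) ^ 2 := by
    rw [hexp, hYY, hXX, hsum_e]
    linarith
  unfold frobNorm
  rw [hFZ]
  exact Real.sqrt_le_sqrt hchain
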